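/- Let r be continuous and strictly positive on [0,H], let α, β, P*, Z* > 0 with αZ* > βP*·max r, and define k₂(λ) = (1/H)∫₀^H r(h)² / ( (λ + r(h)(1 − (P*β/(Z*α)) r(h))) · (αZ* − βP* r(h)) ) dh. Assume the steady-state relation P* = (1/H)∫₀^H r(h)/(αZ*/P* − β r(h)) dh holds. Then k₂(0) > 1, k₂ is strictly decreasing in λ on (0,∞), and k₂(λ) → 0 as λ → +∞; hence there exists a unique λ > 0 with k₂(λ) = 1. -/

import Mathlib

open Set Filter intervalIntegral

theorem stmt4
    (H α β k P Z rM : ℝ) (r : ℝ → ℝ) (k₂ : ℝ → ℝ)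
    (hH : 0 < H) (hα : 0 < α) (hβ : 0 < β) (hP : 0 < P) (hZ : 0 < Z)
    (hr_cont : ContinuousOn r (Icc 0 H))
    (hr_pos : ∀ h ∈ Icc (0:ℝ) H, 0 < r h)
    (hrM_ub : ∀ h ∈ Icc (0:ℝ) H, r h ≤ rM)
    (hrM_mem : ∃ h ∈ Icc (0:ℝ) H, r h = rM)
    (hcond : α * Z > β * P * rM)
    (hk₂ : ∀ lam, k₂ lam = (1 / H) * ∫ h in (0:ℝ)..H,
      (r h) ^ 2 / ((lam + r h * (1 - (P * β / (Z * α)) * r h)) * (α * Z - β * P * r h)))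
    (hss : P = (1 / H) * ∫ h in (0:ℝ)..H, r h / (α * Z / P - β * r h)) :
    k₂ 0 > 1 ∧
    StrictAntiOn k₂ (Ioi 0) ∧
    Tendsto k₂ atTop (nhds 0) ∧
    ∃! lam : ℝ, 0 < lam ∧ k₂ lam = 1 := by
  -- extend r continuously to all of ℝ by projecting onto [0,H]
  set proj : ℝ → ℝ := fun h => min (max h 0) H with hproj
  have hprojmem : ∀ h, proj h ∈ Icc (0:ℝ) H := fun h =>
    ⟨le_min (le_max_right _ _) hH.le, min_le_right _ _⟩
  set r' : ℝ → ℝ := fun h => r (proj h) with hr'def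
  have hprojcont : Continuous proj := (continuous_id.max continuous_const).min continuous_const
  have hr'cont : Continuous r' := hr_cont.comp_continuous hprojcont hprojmem
  have hr'eq : ∀ h ∈ Icc (0:ℝ) H, r' h = r h := by
    intro h hh
    simp only [hr'def, hproj]
    rw [max_eq_left hh.1, min_eq_left hh.2]
  have hr'pos : ∀ h, 0 < r' h := fun h => hr_pos _ (hprojmem h)
  have hr'le : ∀ h, r' h ≤ rM := fun h => hrM_ub _ (hprojmem h)
  have hrMpos : 0 < rM := lt_of_lt_of_le (hr'pos 0) (hr'le 0)
  have hαZ : 0 < α * Z := mul_pos hα hZ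
  have hZα : 0 < Z * α := mul_pos hZ hα
  have hdm : 0 < α * Z - β * P * rM := by linarith
  have hd2 : ∀ h, 0 < α * Z - β * P * r' h := by
    intro h
    have h1 : β * P * r' h ≤ β * P * rM :=
      mul_le_mul_of_nonneg_left (hr'le h) (mul_pos hβ hP).le
    linarith
  have hd2min : ∀ h, α * Z - β * P * rM ≤ α * Z - β * P * r' h := by
    intro h
    have h1 : β * P * r' h ≤ β * P * rM :=
      mul_le_mul_of_nonneg_left (hr'le h) (mul_pos hβ hP).le
    linarith
  have h1c : ∀ h, 0 < 1 - P * β / (Z * α) * r' h := by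
    intro h
    have h1 : P * β / (Z * α) * r' h < 1 := by
      rw [div_mul_eq_mul_div, div_lt_one hZα]
      nlinarith [hd2 h]
    linarith
  have hd1 : ∀ lam h : ℝ, 0 < max lam 0 + r' h * (1 - P * β / (Z * α) * r' h) :=
    fun lam h => add_pos_of_nonneg_of_pos (le_max_right _ _)
      (mul_pos (hr'pos h) (h1c h))
  set G : ℝ → ℝ → ℝ := fun lam h =>
    (r' h) ^ 2 / ((max lam 0 + r' h * (1 - P * β / (Z * α) * r' h)) * (α * Z - β * P * r' h))
    with hG
  have hGcont : Continuous (Function.uncurry G) := by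
    apply Continuous.div
    · fun_prop
    · fun_prop
    · rintro ⟨lam, h⟩
      exact (mul_pos (hd1 lam h) (hd2 h)).ne'
  have hGcont1 : ∀ lam, Continuous (G lam) := fun lam =>
    hGcont.comp (by fun_prop : Continuous fun h : ℝ => (lam, h))
  have hGint : ∀ lam, IntervalIntegrable (G lam) MeasureTheory.volume 0 H := fun lam =>
    (hGcont1 lam).intervalIntegrable _ _
  have hGpos : ∀ lam h, 0 < G lam h := fun lam h =>
    div_pos (pow_pos (hr'pos h) 2) (mul_pos (hd1 lam h) (hd2 h))
  set F : ℝ → ℝ := fun lam => (1 / H) * ∫ h in (0:ℝ)..H, G lam h with hF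
  have h1H : 0 < 1 / H := by positivity
  have hFk : ∀ lam : ℝ, 0 ≤ lam → k₂ lam = F lam := by
    intro lam hlam
    rw [hk₂, hF]
    congr 1
    apply intervalIntegral.integral_congr
    intro h hh
    rw [uIcc_of_le hH.le] at hh
    simp only [hG]
    rw [hr'eq h hh, max_eq_left hlam]
  -- normalized steady state relation
  set q : ℝ → ℝ := fun h => r' h / (α * Z - β * P * r' h) with hq
  have hqcont : Continuous q := by
    apply Continuous.div hr'cont (by fun_prop)
    exact fun h => (hd2 h).ne'
  have hqint : IntervalIntegrable q MeasureTheory.volume 0 H :=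
    hqcont.intervalIntegrable _ _
  set I := ∫ h in (0:ℝ)..H, q h with hI
  have hssI : (1 / H) * I = 1 := by
    have e1 : (∫ h in (0:ℝ)..H, r h / (α * Z / P - β * r h))
        = ∫ h in (0:ℝ)..H, P * q h := by
      apply intervalIntegral.integral_congr
      intro h hh
      rw [uIcc_of_le hH.le] at hh
      simp only [hq]
      rw [hr'eq h hh]
      rw [show α * Z / P - β * r h = (α * Z - β * P * r h) / P by field_simp]
      rw [div_div_eq_mul_div]
      ring
    rw [e1, intervalIntegral.integral_const_mul] at hss
    have h2 : P * ((1 / H) * I) = P * 1 := by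
      rw [mul_one]
      nth_rewrite 2 [hss]
      rw [hI]; ring
    exact mul_left_cancel₀ hP.ne' h2
  -- k₂ 0 > 1
  have hdiff : ∀ h, G 0 h - q h = β * P * (r' h) ^ 2 / (α * Z - β * P * r' h) ^ 2 := by
    intro h
    have hd := (hd2 h).ne'
    have hr0 := (hr'pos h).ne'
    have hne := hαZ.ne'
    simp only [hG, hq, max_self, zero_add]
    rw [show r' h * (1 - P * β / (Z * α) * r' h) = r' h * (α * Z - β * P * r' h) / (α * Z) by
      field_simp]
    field_simp
    ring
  have hpos0 : 0 < ∫ h in (0:ℝ)..H, (G 0 h - q h) := by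
    apply intervalIntegral.intervalIntegral_pos_of_pos_on ((hGint 0).sub hqint)
    · intro x _
      rw [hdiff x]
      have := hd2 x
      have := hr'pos x
      positivity
    · exact hH
  have hsub0 : (∫ h in (0:ℝ)..H, (G 0 h - q h)) = (∫ h in (0:ℝ)..H, G 0 h) - I :=
    intervalIntegral.integral_sub (hGint 0) hqint
  have hF0 : 1 < F 0 := by
    rw [hF]
    nlinarith [mul_pos h1H hpos0]
  have hk0 : k₂ 0 > 1 := by rw [hFk 0 le_rfl]; exact hF0
  -- strict antitonicity
  have hFanti : ∀ a b : ℝ, 0 ≤ a → a < b → F b < F a := by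
    intro a b ha hab
    have hpt : ∀ h, G b h < G a h := by
      intro h
      apply div_lt_div_of_pos_left (pow_pos (hr'pos h) 2) (mul_pos (hd1 a h) (hd2 h))
      apply mul_lt_mul_of_pos_right _ (hd2 h)
      apply add_lt_add_of_lt_of_le _ le_rfl
      rw [max_eq_left ha, max_eq_left (ha.trans hab.le)]
      exact hab
    have hposab : 0 < ∫ h in (0:ℝ)..H, (G a h - G b h) := by
      apply intervalIntegral.intervalIntegral_pos_of_pos_on ((hGint a).sub (hGint b))
      · exact fun x _ => sub_pos.2 (hpt x)
      · exact hH
    have hsubab : (∫ h in (0:ℝ)..H, (G a h - G b h))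
        = (∫ h in (0:ℝ)..H, G a h) - ∫ h in (0:ℝ)..H, G b h :=
      intervalIntegral.integral_sub (hGint a) (hGint b)
    simp only [hF]
    apply mul_lt_mul_of_pos_left _ h1H
    linarith
  have hanti : StrictAntiOn k₂ (Ioi 0) := by
    intro a ha b hb hab
    rw [hFk a (le_of_lt ha), hFk b (le_of_lt hb)]
    exact hFanti a b ha.le hab
  -- tendsto 0
  set C := rM ^ 2 / (α * Z - β * P * rM) with hC
  have hFnonneg : ∀ lam : ℝ, 0 ≤ F lam := fun lam =>
    mul_nonneg h1H.le (intervalIntegral.integral_nonneg hH.le fun h _ => (hGpos lam h).le)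
  have hub : ∀ lam : ℝ, 0 < lam → F lam ≤ C / lam := by
    intro lam hlam
    have hbd : ∀ h ∈ Icc (0:ℝ) H, G lam h ≤ C / lam := by
      intro h _
      have hX : 0 < r' h * (1 - P * β / (Z * α) * r' h) := mul_pos (hr'pos h) (h1c h)
      have hle1 : lam ≤ max lam 0 + r' h * (1 - P * β / (Z * α) * r' h) := by
        rw [max_eq_left hlam.le]; linarith
      have hprod : lam * (α * Z - β * P * rM)
          ≤ (max lam 0 + r' h * (1 - P * β / (Z * α) * r' h)) * (α * Z - β * P * r' h) :=
        mul_le_mul hle1 (hd2min h) hdm.le (by linarith [hd1 lam h])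
      have h1 : G lam h ≤ rM ^ 2 / (lam * (α * Z - β * P * rM)) := by
        apply div_le_div₀ (by positivity) _ (mul_pos hlam hdm) hprod
        exact pow_le_pow_left₀ (hr'pos h).le (hr'le h) 2
      calc G lam h ≤ rM ^ 2 / (lam * (α * Z - β * P * rM)) := h1
        _ = C / lam := by rw [hC, div_div, mul_comm]
    have hmono : (∫ h in (0:ℝ)..H, G lam h) ≤ ∫ _h in (0:ℝ)..H, C / lam :=
      intervalIntegral.integral_mono_on hH.le (hGint lam) (intervalIntegrable_const) hbd
    rw [intervalIntegral.integral_const, smul_eq_mul] at hmono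
    simp only [hF]
    calc (1 / H) * ∫ h in (0:ℝ)..H, G lam h ≤ (1 / H) * ((H - 0) * (C / lam)) :=
        mul_le_mul_of_nonneg_left hmono h1H.le
      _ = C / lam := by field_simp; ring
  have hFtends : Tendsto F atTop (nhds 0) := by
    have hCl : Tendsto (fun lam : ℝ => C / lam) atTop (nhds 0) :=
      tendsto_const_nhds.div_atTop tendsto_id
    apply tendsto_of_tendsto_of_tendsto_of_le_of_le' tendsto_const_nhds hCl
    · exact Eventually.of_forall hFnonneg
    · filter_upwards [eventually_gt_atTop 0] with lam hlam
      exact hub lam hlam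
  have htend : Tendsto k₂ atTop (nhds 0) := by
    apply hFtends.congr'
    filter_upwards [eventually_ge_atTop 0] with lam hlam
    exact (hFk lam hlam).symm
  -- existence and uniqueness
  have hFcont : Continuous F := by
    apply Continuous.mul continuous_const
    exact intervalIntegral.continuous_parametric_intervalIntegral_of_continuous' hGcont 0 H
  have hev : ∀ᶠ lam in atTop, F lam < 1 :=
    hFtends.eventually_lt_const (by norm_num)
  obtain ⟨A, hA1, hA2⟩ := (hev.and (eventually_ge_atTop (1:ℝ))).exists
  have hA0 : (0:ℝ) ≤ A := by linarith
  obtain ⟨lam, hlamIcc, hlamval⟩ :=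
    intermediate_value_Icc' hA0 hFcont.continuousOn ⟨hA1.le, hF0.le⟩
  have hlampos : 0 < lam := by
    rcases lt_or_eq_of_le hlamIcc.1 with hlt | heq
    · exact hlt
    · exfalso; rw [← heq] at hlamval; linarith
  refine ⟨hk0, hanti, htend, lam, ⟨hlampos, by rw [hFk lam hlampos.le]; exact hlamval⟩, ?_⟩
  rintro y ⟨hy, hy1⟩
  apply hanti.injOn (mem_Ioi.2 hy) (mem_Ioi.2 hlampos)
  rw [hy1, hFk lam hlampos.le, hlamval]
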